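/- Let V be a finite nonempty type and μ : V → V → ℝ a symmetric function with μ x y ≥ 0 and μ x x = 0 for all x, y, such that μ x y ≥ 1 whenever μ x y ≠ 0. Set μ_x = ∑_{y} μ x y and assume μ_x > 0 for every x. Let G be the simple graph on V with x adjacent to y iff x ≠ y and μ x y > 0, assumed connected, with graph distance d(x,y). Define L ∈ Matrix V V ℝ by L x y = μ x y / μ_x for x ≠ y and L x x = -1, and for t ≥ 0 set q_t(x,y) = (Matrix.exp (t • L)) x y / μ_y. Then for every x ∈ V and every real r > 0, writing V(x,r) = ∑_{y : (d(x,y) : ℝ) ≤ r} μ_y, one has q_{2*r*V(x,r)}(x,x) ≤ 2 / V(x,r). -/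

import Mathlib

open NormedSpace Matrix

section Aux

variable {V : Type*} [Fintype V] [DecidableEq V]

noncomputable def entryCLM (x w : V) : Matrix V V ℝ →L[ℝ] ℝ :=
  { toFun := fun A => A x w
    map_add' := fun _ _ => rfl
    map_smul' := fun _ _ => rfl
    cont := by
      show Continuous fun A : V → V → ℝ => A x w
      exact (continuous_apply w).comp (continuous_apply x) }

lemma expEntry_hasDerivAt (L : Matrix V V ℝ) (x w : V) (t : ℝ) :
    HasDerivAt (fun s : ℝ => exp (s • L) x w) ((exp (t • L) * L) x w) t := by
  letI : SeminormedRing (Matrix V V ℝ) := Matrix.linftyOpSemiNormedRing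
  letI : NormedRing (Matrix V V ℝ) := Matrix.linftyOpNormedRing
  letI : NormedAlgebra ℝ (Matrix V V ℝ) := Matrix.linftyOpNormedAlgebra
  exact (entryCLM x w).hasFDerivAt.comp_hasDerivAt t (hasDerivAt_exp_smul_const (𝕂 := ℝ) L t)

lemma exp_rowsum (L : Matrix V V ℝ) (hrow : ∀ z, ∑ w, L z w = 0) (t : ℝ) (z : V) :
    ∑ w, exp (t • L) z w = 1 := by
  have hderiv : ∀ s : ℝ, HasDerivAt (fun s : ℝ => ∑ w, exp (s • L) z w) 0 s := by
    intro s
    have h : HasDerivAt (fun s : ℝ => ∑ w, exp (s • L) z w)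
        (∑ w, (exp (s • L) * L) z w) s :=
      HasDerivAt.fun_sum (fun w _ => expEntry_hasDerivAt L z w s)
    convert h using 1
    rw [eq_comm]
    calc ∑ w, (exp (s • L) * L) z w = ∑ w, ∑ k, exp (s • L) z k * L k w := by
          simp [Matrix.mul_apply]
      _ = ∑ k, ∑ w, exp (s • L) z k * L k w := Finset.sum_comm
      _ = ∑ k, exp (s • L) z k * (∑ w, L k w) := by simp [Finset.mul_sum]
      _ = 0 := by simp [hrow]
  have hconst := is_const_of_deriv_eq_zero (f := fun s : ℝ => ∑ w, exp (s • L) z w)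
    (fun s => (hderiv s).differentiableAt) (fun s => (hderiv s).deriv) t 0
  rw [hconst]
  simp [Matrix.one_apply]

lemma pow_entry_nonneg (N : Matrix V V ℝ) (hN : ∀ z w, 0 ≤ N z w) (n : ℕ) :
    ∀ z w, 0 ≤ (N ^ n) z w := by
  induction n with
  | zero =>
    intro z w
    rw [pow_zero, Matrix.one_apply]
    split <;> norm_num
  | succ n ih =>
    intro z w
    rw [pow_succ, Matrix.mul_apply]
    exact Finset.sum_nonneg fun k _ => mul_nonneg (ih z k) (hN k w)

lemma exp_entry_nonneg (L : Matrix V V ℝ) (c : ℝ) (hdiagL : ∀ z, L z z = c)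
    (hoff : ∀ z w, z ≠ w → 0 ≤ L z w) {t : ℝ} (ht : 0 ≤ t) (z w : V) :
    0 ≤ exp (t • L) z w := by
  letI : SeminormedRing (Matrix V V ℝ) := Matrix.linftyOpSemiNormedRing
  letI : NormedRing (Matrix V V ℝ) := Matrix.linftyOpNormedRing
  letI : NormedAlgebra ℝ (Matrix V V ℝ) := Matrix.linftyOpNormedAlgebra
  set N : Matrix V V ℝ := t • L - (t * c) • (1 : Matrix V V ℝ) with hNdef
  have hNnn : ∀ a b, 0 ≤ N a b := by
    intro a b
    by_cases hab : a = b
    · subst hab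
      simp [hNdef, Matrix.sub_apply, Matrix.smul_apply, Matrix.one_apply, hdiagL a, smul_eq_mul]
    · simp only [hNdef, Matrix.sub_apply, Matrix.smul_apply, Matrix.one_apply,
        if_neg hab, smul_eq_mul, mul_zero, sub_zero]
      exact mul_nonneg ht (hoff a b hab)
  have hsplit : t • L = (t * c) • (1 : Matrix V V ℝ) + N := by
    rw [hNdef]; abel
  have hcomm : Commute ((t * c) • (1 : Matrix V V ℝ)) N := (Commute.one_left N).smul_left (t * c)
  have halg : (t * c) • (1 : Matrix V V ℝ) = algebraMap ℝ (Matrix V V ℝ) (t * c) :=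
    (Algebra.algebraMap_eq_smul_one _).symm
  rw [hsplit, Matrix.exp_add_of_commute _ _ hcomm]
  rw [halg]
  erw [← algebraMap_exp_comm]
  rw [Algebra.algebraMap_eq_smul_one, smul_mul_assoc, one_mul,
    Matrix.smul_apply, smul_eq_mul]
  apply mul_nonneg
  · rw [← Real.exp_eq_exp_ℝ]; exact (Real.exp_pos _).le
  · have hsum : Summable (fun n : ℕ => ((n.factorial : ℝ))⁻¹ • N ^ n) :=
      expSeries_summable' (𝕂 := ℝ) N
    have hsum2 : Summable (fun n : ℕ => (((n.factorial : ℝ))⁻¹ • N ^ n) z) :=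
      hsum.map (Pi.evalAddMonoidHom (fun _ : V => V → ℝ) z) (continuous_apply z)
    have hexpN : exp N = ∑' n : ℕ, ((n.factorial : ℝ))⁻¹ • N ^ n := by
      rw [exp_eq_tsum ℝ]
    rw [hexpN]
    erw [tsum_apply hsum, tsum_apply hsum2]
    apply tsum_nonneg
    intro n
    simp only [Matrix.smul_apply, smul_eq_mul]
    exact mul_nonneg (by positivity) (pow_entry_nonneg N hNnn n z w)

lemma exp_detbal (L : Matrix V V ℝ) (μv : V → ℝ) (hpos : ∀ z, 0 < μv z)
    (hDL : ∀ z w, μv z * L z w = μv w * L w z) (t : ℝ) (z w : V) :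
    μv z * exp (t • L) z w = μv w * exp (t • L) w z := by
  set D : Matrix V V ℝ := Matrix.diagonal μv with hD
  have hDdet : IsUnit D.det := by
    rw [hD, Matrix.det_diagonal]
    exact isUnit_iff_ne_zero.2 (Finset.prod_ne_zero_iff.2 fun a _ => (hpos a).ne')
  have hDunit : IsUnit D := (Matrix.isUnit_iff_isUnit_det _).2 hDdet
  have h1 : D * (t • L) = (t • L)ᵀ * D := by
    ext a b
    simp only [hD, Matrix.diagonal_mul, Matrix.mul_diagonal, Matrix.transpose_apply,
      Matrix.smul_apply, smul_eq_mul]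
    calc μv a * (t * L a b) = t * (μv a * L a b) := by ring
      _ = t * (μv b * L b a) := by rw [hDL]
      _ = t * L b a * μv b := by ring
  have hconj : (t • L)ᵀ = D * (t • L) * D⁻¹ := by
    rw [h1, Matrix.mul_assoc, Matrix.mul_nonsing_inv _ hDdet, Matrix.mul_one]
  have h2 : (exp (t • L))ᵀ = D * exp (t • L) * D⁻¹ := by
    rw [← Matrix.exp_transpose, hconj, Matrix.exp_conj _ _ hDunit]
  have h3 : (exp (t • L))ᵀ * D = D * exp (t • L) := by
    rw [h2, Matrix.mul_assoc, Matrix.nonsing_inv_mul _ hDdet, Matrix.mul_one]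
  have h4 := congrFun (congrFun h3 w) z
  simp only [hD, Matrix.mul_diagonal, Matrix.diagonal_mul, Matrix.transpose_apply] at h4
  rw [mul_comm] at h4
  exact h4

end Aux

open NormedSpace Matrix
open scoped RealInnerProductSpace

section Aux2

variable {V : Type*} [Fintype V] [DecidableEq V]

lemma quadform_eq (μ : V → V → ℝ) (μv : V → ℝ) (L : Matrix V V ℝ)
    (hsym : ∀ z w, μ z w = μ w z) (hdiag : ∀ z, μ z z = 0)
    (hμv : ∀ z, μv z = ∑ w, μ z w) (hpos : ∀ z, 0 < μv z)
    (hL : ∀ z w, L z w = if z = w then -1 else μ z w / μv z)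
    (g : V → ℝ) :
    2 * (∑ z, (∑ w, (μv z * L z w) * g w) * g z)
      = - ∑ z, ∑ w, μ z w * (g z - g w) ^ 2 := by
  classical
  have hc : ∀ z w, μv z * L z w = μ z w - (if z = w then μv z else 0) := by
    intro z w
    by_cases h : z = w
    · subst h
      rw [hL, if_pos rfl, if_pos rfl, hdiag]
      ring
    · rw [hL, if_neg h, if_neg h, sub_zero, mul_comm, div_mul_cancel₀ _ (hpos z).ne']
  have h1 : ∀ z, ∑ w, (μv z * L z w) * g w = (∑ w, μ z w * g w) - μv z * g z := by
    intro z
    calc ∑ w, (μv z * L z w) * g w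
        = ∑ w, (μ z w * g w - (if z = w then μv z * g w else 0)) := by
          apply Finset.sum_congr rfl
          intro w _
          rw [hc]
          by_cases h : z = w <;> simp [h] <;> ring
      _ = (∑ w, μ z w * g w) - ∑ w, (if z = w then μv z * g w else 0) :=
          Finset.sum_sub_distrib _ _
      _ = (∑ w, μ z w * g w) - μv z * g z := by
          congr 1
          simp
  set X := ∑ z, ∑ w, μ z w * g w * g z with hX
  set Y := ∑ z, μv z * g z ^ 2 with hYdef
  have hY1 : ∑ z, ∑ w, μ z w * g z ^ 2 = Y := by
    apply Finset.sum_congr rfl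
    intro z _
    rw [← Finset.sum_mul, ← hμv z]
  have hcol : ∀ w, ∑ z, μ z w = μv w := by
    intro w
    rw [hμv w]
    exact Finset.sum_congr rfl fun z _ => (hsym z w)
  have hY2 : ∑ z, ∑ w, μ z w * g w ^ 2 = Y := by
    rw [Finset.sum_comm]
    apply Finset.sum_congr rfl
    intro w _
    rw [← Finset.sum_mul, hcol w]
  have hexp : ∑ z, ∑ w, μ z w * (g z - g w) ^ 2 = Y - 2 * X + Y := by
    calc ∑ z, ∑ w, μ z w * (g z - g w) ^ 2
        = ∑ z, ∑ w, (μ z w * g z ^ 2 - 2 * (μ z w * g w * g z) + μ z w * g w ^ 2) := by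
          apply Finset.sum_congr rfl
          intro z _
          apply Finset.sum_congr rfl
          intro w _
          ring
      _ = ∑ z, ((∑ w, μ z w * g z ^ 2) - 2 * (∑ w, μ z w * g w * g z) + ∑ w, μ z w * g w ^ 2) := by
          apply Finset.sum_congr rfl
          intro z _
          rw [Finset.sum_add_distrib, Finset.sum_sub_distrib, Finset.mul_sum]
      _ = (∑ z, ∑ w, μ z w * g z ^ 2) - 2 * X + ∑ z, ∑ w, μ z w * g w ^ 2 := by
          rw [Finset.sum_add_distrib, Finset.sum_sub_distrib, hX, Finset.mul_sum]
      _ = Y - 2 * X + Y := by rw [hY1, hY2]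
  have hLHS : ∑ z, (∑ w, (μv z * L z w) * g w) * g z = X - Y := by
    calc ∑ z, (∑ w, (μv z * L z w) * g w) * g z
        = ∑ z, (((∑ w, μ z w * g w) - μv z * g z) * g z) := by
          apply Finset.sum_congr rfl
          intro z _
          rw [h1]
      _ = ∑ z, ((∑ w, μ z w * g w * g z) - μv z * g z ^ 2) := by
          apply Finset.sum_congr rfl
          intro z _
          rw [sub_mul, Finset.sum_mul]
          congr 1
          ring
      _ = X - Y := by rw [Finset.sum_sub_distrib, hX, hYdef]
  rw [hLHS, hexp]
  ring

lemma solve_poisson (cM : Matrix V V ℝ) (hsymm : ∀ z w, cM z w = cM w z)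
    (hker : ∀ g : V → ℝ, cM.mulVec g = 0 → ∃ k : ℝ, ∀ z, g z = k)
    (w₀ : V → ℝ) (hw0 : ∑ z, w₀ z = 0) : ∃ u : V → ℝ, cM.mulVec u = w₀ := by
  classical
  let T : EuclideanSpace ℝ V →ₗ[ℝ] EuclideanSpace ℝ V :=
    { toFun := fun g => WithLp.toLp 2 (cM.mulVec g)
      map_add' := fun a b => by ext; simp [Matrix.mulVec_add]
      map_smul' := fun c a => by ext; simp [Matrix.mulVec_smul] }
  have hTapp : ∀ g : EuclideanSpace ℝ V, T g = cM.mulVec g := fun _ => rfl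
  have hinner : ∀ a b : EuclideanSpace ℝ V, (inner ℝ a b : ℝ) = ∑ z, a z * b z := by
    intro a b
    rw [PiLp.inner_apply]
    apply Finset.sum_congr rfl
    intro z _
    simp [RCLike.inner_apply, mul_comm]
  have hsymT : ∀ a b : EuclideanSpace ℝ V, (inner ℝ (T a) b : ℝ) = (inner ℝ a (T b) : ℝ) := by
    intro a b
    rw [hinner, hinner]
    calc ∑ z, (T a) z * b z = ∑ z, ∑ w, cM z w * a w * b z := by
          apply Finset.sum_congr rfl
          intro z _
          rw [hTapp]
          simp only [Matrix.mulVec, dotProduct, Finset.sum_mul]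
      _ = ∑ w, ∑ z, cM z w * a w * b z := Finset.sum_comm
      _ = ∑ w, a w * (T b) w := by
          apply Finset.sum_congr rfl
          intro w _
          rw [hTapp]
          simp only [Matrix.mulVec, dotProduct, Finset.mul_sum]
          apply Finset.sum_congr rfl
          intro z _
          rw [hsymm z w]
          ring
      _ = ∑ z, a z * (T b) z := rfl
  set W : Submodule ℝ (EuclideanSpace ℝ V) := LinearMap.range T with hW
  let w' : EuclideanSpace ℝ V := WithLp.toLp 2 w₀
  obtain ⟨y, hy, d, hd, hsum⟩ := W.exists_add_mem_mem_orthogonal w'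
  have hdW : ∀ u ∈ W, (inner ℝ u d : ℝ) = 0 := fun u hu => (Submodule.mem_orthogonal W d).1 hd u hu
  have hTd : T d = 0 := by
    have h0 : (inner ℝ (T d) (T d) : ℝ) = 0 := by
      calc (inner ℝ (T d) (T d) : ℝ) = (inner ℝ d (T (T d)) : ℝ) := hsymT d (T d)
        _ = (inner ℝ (T (T d)) d : ℝ) := real_inner_comm _ _
        _ = 0 := hdW _ (LinearMap.mem_range_self T (T d))
    exact inner_self_eq_zero.1 h0
  obtain ⟨k, hk⟩ := hker d (congrArg WithLp.ofLp hTd)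
  have hd0 : d = 0 := by
    have h2 : (inner ℝ d d : ℝ) = 0 := by
      have hwd : (inner ℝ w' d : ℝ) = 0 := by
        rw [hinner]
        calc ∑ z, w' z * d z = ∑ z, w₀ z * k := by
              apply Finset.sum_congr rfl
              intro z _
              rw [hk z]
          _ = (∑ z, w₀ z) * k := by rw [Finset.sum_mul]
          _ = 0 := by rw [hw0, zero_mul]
      have hyd : (inner ℝ y d : ℝ) = 0 := hdW y hy
      calc (inner ℝ d d : ℝ) = (inner ℝ (y + d) d : ℝ) - (inner ℝ y d : ℝ) := by
            rw [inner_add_left]; ring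
        _ = (inner ℝ w' d : ℝ) - (inner ℝ y d : ℝ) := by rw [← hsum]
        _ = 0 := by rw [hwd, hyd, sub_zero]
    exact inner_self_eq_zero.1 h2
  have hyw : w' = y := by rw [hsum, hd0, add_zero]
  obtain ⟨u, hu⟩ := hy
  exact ⟨u.ofLp, congrArg WithLp.ofLp (hu.trans hyw.symm)⟩

lemma walk_sq_bound {G : SimpleGraph V} (μ : V → V → ℝ)
    (hμ1 : ∀ z w, G.Adj z w → 1 ≤ μ z w) (g : V → ℝ) :
    ∀ {a b : V} (p : G.Walk a b),
      (g a - g b) ^ 2 ≤ (p.length : ℝ) *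
        (p.darts.map fun d => μ d.toProd.1 d.toProd.2 * (g d.toProd.1 - g d.toProd.2) ^ 2).sum := by
  intro a b p
  induction p with
  | nil => simp
  | @cons a c b h q ih =>
    have hSnn : (0:ℝ) ≤ (q.darts.map fun d =>
        μ d.toProd.1 d.toProd.2 * (g d.toProd.1 - g d.toProd.2) ^ 2).sum := by
      apply List.sum_nonneg
      intro x hx
      obtain ⟨d, hd, rfl⟩ := List.mem_map.1 hx
      have hadj := d.adj
      exact mul_nonneg (le_trans zero_le_one (hμ1 _ _ hadj)) (sq_nonneg _)
    have hs : (g a - g c) ^ 2 ≤ μ a c * (g a - g c) ^ 2 := by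
      nlinarith [mul_nonneg (sub_nonneg.2 (hμ1 a c h)) (sq_nonneg (g a - g c))]
    set k : ℝ := (q.length : ℝ) with hk
    have hknn : (0:ℝ) ≤ k := Nat.cast_nonneg _
    set S := (q.darts.map fun d =>
        μ d.toProd.1 d.toProd.2 * (g d.toProd.1 - g d.toProd.2) ^ 2).sum with hS
    simp only [SimpleGraph.Walk.darts_cons, List.map_cons, List.sum_cons,
      SimpleGraph.Walk.length_cons]
    push_cast
    have ht2 : (g c - g b) ^ 2 ≤ k * S := ih
    have hst : g a - g b = (g a - g c) + (g c - g b) := by ring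
    rw [hst]
    set s' := g a - g c with hs'def
    set t' := g c - g b with ht'def
    set fe := μ a c * s' ^ 2 with hfedef
    show (s' + t') ^ 2 ≤ (k + 1) * (fe + S)
    by_cases hq : q.length = 0
    · have hk0 : k = 0 := by rw [hk, hq]; norm_num
      have ht0 : t' = 0 := by
        have h2 : t' ^ 2 ≤ 0 := by
          have h4 := ht2
          rw [hk0, zero_mul] at h4
          exact h4
        have h3 : t' ^ 2 = 0 := le_antisymm h2 (sq_nonneg _)
        exact pow_eq_zero_iff two_ne_zero |>.mp h3
      rw [ht0, add_zero, hk0]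
      nlinarith [hs, hSnn]
    · have hk1 : (1:ℝ) ≤ k := by
        rw [hk]
        exact_mod_cast Nat.one_le_iff_ne_zero.2 hq
      have hkpos : (0:ℝ) < k := lt_of_lt_of_le zero_lt_one hk1
      have key : 0 ≤ k * (k + 1) * (fe - s' ^ 2) + (k + 1) * (k * S - t' ^ 2) + (k * s' - t') ^ 2 := by
        have n1 : 0 ≤ fe - s' ^ 2 := by linarith [hs]
        have n2 : 0 ≤ k * S - t' ^ 2 := by linarith [ht2]
        have n3 : (0:ℝ) ≤ k * (k + 1) := by nlinarith
        have n4 : (0:ℝ) ≤ k + 1 := by linarith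
        nlinarith [sq_nonneg (k * s' - t'), mul_nonneg n3 n1, mul_nonneg n4 n2]
      have hA : k * ((k + 1) * (fe + S) - (s' + t') ^ 2)
          = k * (k + 1) * (fe - s' ^ 2) + (k + 1) * (k * S - t' ^ 2) + (k * s' - t') ^ 2 := by
        ring
      nlinarith [key, hA, hkpos]

lemma darts_sum_le {G : SimpleGraph V} (μ : V → V → ℝ) (hnn : ∀ z w, 0 ≤ μ z w) (g : V → ℝ)
    {a b : V} (p : G.Walk a b) (hp : p.IsPath) :
    (p.darts.map fun d => μ d.toProd.1 d.toProd.2 * (g d.toProd.1 - g d.toProd.2) ^ 2).sum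
      ≤ ∑ z, ∑ w, μ z w * (g z - g w) ^ 2 := by
  classical
  have hnodup : p.darts.Nodup :=
    SimpleGraph.Walk.darts_nodup_of_support_nodup hp.support_nodup
  rw [← List.sum_toFinset _ hnodup]
  have himg : ∑ d ∈ p.darts.toFinset, μ d.toProd.1 d.toProd.2 * (g d.toProd.1 - g d.toProd.2) ^ 2
      = ∑ pr ∈ p.darts.toFinset.image (fun d : G.Dart => d.toProd),
          μ pr.1 pr.2 * (g pr.1 - g pr.2) ^ 2 := by
    rw [Finset.sum_image]
    intro d _ d' _ hdd
    exact SimpleGraph.Dart.toProd_injective hdd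
  rw [himg]
  have hsub : p.darts.toFinset.image (fun d : G.Dart => d.toProd) ⊆ Finset.univ :=
    Finset.subset_univ _
  calc ∑ pr ∈ p.darts.toFinset.image (fun d : G.Dart => d.toProd),
          μ pr.1 pr.2 * (g pr.1 - g pr.2) ^ 2
      ≤ ∑ pr : V × V, μ pr.1 pr.2 * (g pr.1 - g pr.2) ^ 2 := by
        apply Finset.sum_le_sum_of_subset_of_nonneg hsub
        intro pr _ _
        exact mul_nonneg (hnn _ _) (sq_nonneg _)
    _ = ∑ z, ∑ w, μ z w * (g z - g w) ^ 2 := Fintype.sum_prod_type _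

end Aux2
/-- Theorem 4.1 for a finite weighted graph: the on-diagonal heat kernel of the
continuous-time random walk satisfies `q_{2rV(x,r)}(x,x) ≤ 2/V(x,r)`. -/
theorem on_diagonal_heat_kernel_upper_bound
    {V : Type*} [Fintype V] [Nonempty V] [DecidableEq V]
    (μ : V → V → ℝ) (hsym : ∀ x y, μ x y = μ y x)
    (hnonneg : ∀ x y, 0 ≤ μ x y) (hdiag : ∀ x, μ x x = 0)
    (hone : ∀ x y, μ x y ≠ 0 → 1 ≤ μ x y)
    (μv : V → ℝ) (hμv : ∀ x, μv x = ∑ y, μ x y)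
    (hpos : ∀ x, 0 < μv x)
    (G : SimpleGraph V) (hG : ∀ x y, G.Adj x y ↔ x ≠ y ∧ 0 < μ x y)
    (hconn : G.Connected)
    (L : Matrix V V ℝ)
    (hL : ∀ x y, L x y = if x = y then -1 else μ x y / μv x)
    (q : ℝ → V → V → ℝ)
    (hq : ∀ t x y, q t x y = NormedSpace.exp (t • L) x y / μv y)
    (x : V) (r : ℝ) (hr : 0 < r)
    (Vol : ℝ) (hVol : Vol = ∑ y, if (G.dist x y : ℝ) ≤ r then μv y else 0) :
    q (2 * r * Vol) x x ≤ 2 / Vol := by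
  classical
  have hμvne : ∀ z, μv z ≠ 0 := fun z => (hpos z).ne'
  set P : ℝ → Matrix V V ℝ := fun t => NormedSpace.exp (t • L) with hPdef
  set T : ℝ := 2 * r * Vol with hTdef
  have hqP : ∀ t : ℝ, q t x x = P t x x / μv x := fun t => hq t x x
  -- Vol is positive
  have hVolpos : 0 < Vol := by
    rw [hVol]
    have hx0 : (if (G.dist x x : ℝ) ≤ r then μv x else 0) = μv x :=
      if_pos (by simp only [SimpleGraph.dist_self, Nat.cast_zero]; exact hr.le)
    calc (0:ℝ) < μv x := hpos x
      _ = (if (G.dist x x : ℝ) ≤ r then μv x else 0) := hx0.symm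
      _ ≤ ∑ y, if (G.dist x y : ℝ) ≤ r then μv y else 0 := by
          apply Finset.single_le_sum (f := fun y => if (G.dist x y : ℝ) ≤ r then μv y else 0)
          · intro z _
            split
            · exact (hpos z).le
            · exact le_refl 0
          · exact Finset.mem_univ x
  have hVolne : Vol ≠ 0 := hVolpos.ne'
  have hdxx : (G.dist x x : ℝ) ≤ r := by
    simp only [SimpleGraph.dist_self, Nat.cast_zero]
    exact hr.le
  have hTpos : 0 < T := by rw [hTdef]; positivity
  -- basic facts about L
  have hLdiag : ∀ z, L z z = (-1 : ℝ) := fun z => by rw [hL, if_pos rfl]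
  have hLoff : ∀ z w, z ≠ w → 0 ≤ L z w := by
    intro z w h
    rw [hL, if_neg h]
    exact div_nonneg (hnonneg z w) (hpos z).le
  have hLsplit : ∀ z w, L z w = μ z w / μv z - (if z = w then 1 else 0) := by
    intro z w
    by_cases h : z = w
    · subst h
      rw [hL, if_pos rfl, if_pos rfl, hdiag, zero_div]
      ring
    · rw [hL, if_neg h, if_neg h, sub_zero]
  have hrow : ∀ z, ∑ w, L z w = 0 := by
    intro z
    calc ∑ w, L z w = ∑ w, (μ z w / μv z - (if z = w then 1 else 0)) :=
          Finset.sum_congr rfl fun w _ => hLsplit z w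
      _ = (∑ w, μ z w / μv z) - ∑ w, (if z = w then 1 else 0) := Finset.sum_sub_distrib _ _
      _ = (∑ w, μ z w) / μv z - 1 := by rw [← Finset.sum_div]; simp
      _ = 0 := by rw [← hμv, div_self (hμvne z)]; ring
  have hDL : ∀ z w, μv z * L z w = μv w * L w z := by
    intro z w
    by_cases h : z = w
    · subst h; rfl
    · rw [hL, hL, if_neg h, if_neg (Ne.symm h), mul_comm, div_mul_cancel₀ _ (hμvne z),
        mul_comm (μv w), div_mul_cancel₀ _ (hμvne w)]
      exact hsym z w
  -- heat semigroup facts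
  have hPnn : ∀ t : ℝ, 0 ≤ t → ∀ z w, 0 ≤ P t z w := by
    intro t ht z w
    exact exp_entry_nonneg L (-1) hLdiag hLoff ht z w
  have hProw : ∀ (t : ℝ) z, ∑ w, P t z w = 1 := fun t z => exp_rowsum L hrow t z
  have hPdb : ∀ (t : ℝ) z w, μv z * P t z w = μv w * P t w z :=
    fun t z w => exp_detbal L μv hpos hDL t z w
  -- quadratic form facts
  have hquad := quadform_eq μ μv L hsym hdiag hμv hpos hL
  have hD2nn : ∀ g : V → ℝ, 0 ≤ ∑ z, ∑ w, μ z w * (g z - g w) ^ 2 := by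
    intro g
    apply Finset.sum_nonneg
    intro z _
    exact Finset.sum_nonneg fun w _ => mul_nonneg (hnonneg z w) (sq_nonneg _)
  -- ψ t = q (2t) x x
  set ψ : ℝ → ℝ := fun t => ∑ z, (P t x z) ^ 2 / μv z with hψdef
  have hψderiv : ∀ t : ℝ, HasDerivAt ψ
      (∑ z, (2 * P t x z ^ 1 * (P t * L) x z) / μv z) t := by
    intro t
    simp only [hψdef]
    apply HasDerivAt.fun_sum
    intro z _
    exact ((expEntry_hasDerivAt L x z t).pow 2).div_const (μv z)
  have hψd_nonpos : ∀ t : ℝ, (∑ z, (2 * P t x z ^ 1 * (P t * L) x z) / μv z) ≤ 0 := by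
    intro t
    set g : V → ℝ := fun z => P t x z / μv z with hg
    have hPg : ∀ z, P t x z = g z * μv z := by
      intro z
      simp only [hg]
      exact (div_mul_cancel₀ _ (hμvne z)).symm
    have hPL : ∀ z, (P t * L) x z = ∑ w, (μv z * L z w) * g w := by
      intro z
      calc (P t * L) x z = ∑ w, P t x w * L w z := Matrix.mul_apply
        _ = ∑ w, (μv w * L w z) * g w := by
            apply Finset.sum_congr rfl
            intro w _
            rw [hPg w]
            ring
        _ = ∑ w, (μv z * L z w) * g w := by
            apply Finset.sum_congr rfl
            intro w _
            rw [hDL z w]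
    have e1 : (∑ z, (2 * P t x z ^ 1 * (P t * L) x z) / μv z)
        = 2 * (∑ z, (∑ w, (μv z * L z w) * g w) * g z) := by
      rw [Finset.mul_sum]
      apply Finset.sum_congr rfl
      intro z _
      rw [hPL z, pow_one]
      simp only [hg]
      ring
    rw [e1, hquad g]
    exact neg_nonpos.2 (hD2nn g)
  have hψanti : Antitone ψ := by
    apply antitone_of_deriv_nonpos
    · exact fun t => (hψderiv t).differentiableAt
    · intro t
      rw [(hψderiv t).deriv]
      exact hψd_nonpos t
  -- q t x x = ψ (t/2)
  have hqψ : ∀ t : ℝ, q t x x = ψ (t / 2) := by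
    intro t
    have h1 : t • L = (t / 2) • L + (t / 2) • L := by
      rw [← add_smul]
      norm_num
    have hsemi : P t = P (t / 2) * P (t / 2) := by
      show NormedSpace.exp (t • L)
        = NormedSpace.exp ((t / 2) • L) * NormedSpace.exp ((t / 2) • L)
      rw [h1]
      exact Matrix.exp_add_of_commute _ _ (Commute.refl _)
    rw [hqP t]
    calc P t x x / μv x = (∑ z, P (t/2) x z * P (t/2) z x) / μv x := by
          rw [hsemi, Matrix.mul_apply]
      _ = ∑ z, P (t/2) x z * P (t/2) z x / μv x := Finset.sum_div _ _ _
      _ = ∑ z, (P (t/2) x z) ^ 2 / μv z := by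
          apply Finset.sum_congr rfl
          intro z _
          have hdb := hPdb (t/2) z x
          have h2 : P (t/2) z x = μv x * P (t/2) x z / μv z := by
            rw [eq_div_iff (hμvne z)]
            linear_combination hdb
          rw [h2, pow_two]
          field_simp
          rw [mul_comm (μv x) (μv z), mul_div_mul_right _ _ (hμvne x)]
      _ = ψ (t / 2) := by simp only [hψdef]
  -- the potential u
  set vv : V → ℝ := fun z =>
    (if (G.dist x z : ℝ) ≤ r then 1 else 0) / Vol - (if z = x then 1 else 0) / μv x with hvvdef
  set cM : Matrix V V ℝ := Matrix.of fun z w => μv z * L z w with hcM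
  have hcsym : ∀ z w, cM z w = cM w z := fun z w => hDL z w
  have hcmul : ∀ (g : V → ℝ) z, cM.mulVec g z = ∑ w, (μv z * L z w) * g w := by
    intro g z
    rfl
  have hker : ∀ g : V → ℝ, cM.mulVec g = 0 → ∃ k : ℝ, ∀ z, g z = k := by
    intro g hg
    have hzero : 2 * (∑ z, (∑ w, (μv z * L z w) * g w) * g z) = 0 := by
      have h1 : ∀ z, (∑ w, (μv z * L z w) * g w) = 0 := by
        intro z
        rw [← hcmul g z, hg]
        rfl
      simp [h1]
    have hD2 : ∑ z, ∑ w, μ z w * (g z - g w) ^ 2 = 0 := by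
      have h2 := hquad g
      rw [hzero] at h2
      linarith
    have hterm : ∀ z w, μ z w * (g z - g w) ^ 2 = 0 := by
      intro z w
      have h1 := (Finset.sum_eq_zero_iff_of_nonneg
        (fun z _ => Finset.sum_nonneg fun w _ => mul_nonneg (hnonneg z w) (sq_nonneg _))).1 hD2
      have h2 := (Finset.sum_eq_zero_iff_of_nonneg
        (fun w _ => mul_nonneg (hnonneg z w) (sq_nonneg _))).1 (h1 z (Finset.mem_univ z))
      exact h2 w (Finset.mem_univ w)
    have hadj : ∀ z w, G.Adj z w → g z = g w := by
      intro z w ha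
      have hμpos := ((hG z w).1 ha).2
      rcases mul_eq_zero.1 (hterm z w) with h | h
      · exact absurd h hμpos.ne'
      · have h3 := pow_eq_zero_iff two_ne_zero |>.1 h
        linarith [h3]
    refine ⟨g x, fun z => ?_⟩
    have hwalk : ∀ (a b : V) (p : G.Walk a b), g a = g b := by
      intro a b p
      induction p with
      | nil => rfl
      | cons h q ih => exact (hadj _ _ h).trans ih
    obtain ⟨p⟩ := hconn.preconnected z x
    exact hwalk z x p
  have hw0 : ∑ z, μv z * vv z = 0 := by
    have he : ∀ z, μv z * vv z = (if (G.dist x z : ℝ) ≤ r then μv z else 0) / Vol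
        - (if z = x then μv z / μv x else 0) := by
      intro z
      simp only [hvvdef]
      split_ifs <;> ring
    calc ∑ z, μv z * vv z = ∑ z, ((if (G.dist x z : ℝ) ≤ r then μv z else 0) / Vol
          - (if z = x then μv z / μv x else 0)) := Finset.sum_congr rfl fun z _ => he z
      _ = (∑ z, (if (G.dist x z : ℝ) ≤ r then μv z else 0)) / Vol
          - ∑ z, (if z = x then μv z / μv x else 0) := by
          rw [Finset.sum_sub_distrib, Finset.sum_div]
      _ = Vol / Vol - μv x / μv x := by
          rw [← hVol]
          congr 1
          simp
      _ = 0 := by rw [div_self hVolne, div_self (hμvne x)]; ring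
  obtain ⟨u, hu⟩ := solve_poisson cM hcsym hker (fun z => μv z * vv z) hw0
  have hLu : ∀ z, ∑ w, L z w * u w = vv z := by
    intro z
    have h1 : ∑ w, (μv z * L z w) * u w = μv z * vv z := by
      rw [← hcmul u z, hu]
    have h2 : ∑ w, (μv z * L z w) * u w = μv z * ∑ w, L z w * u w := by
      rw [Finset.mul_sum]
      exact Finset.sum_congr rfl fun w _ => by ring
    rw [h2] at h1
    exact mul_left_cancel₀ (hμvne z) h1
  -- the function F and its derivative
  set F : ℝ → ℝ := fun t => ∑ z, P t x z * u z with hFdef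
  have hFderiv : ∀ t : ℝ, HasDerivAt F (∑ z, (P t * L) x z * u z) t := by
    intro t
    simp only [hFdef]
    apply HasDerivAt.fun_sum
    intro z _
    exact (expEntry_hasDerivAt L x z t).mul_const (u z)
  have hFd_eq : ∀ t : ℝ, (∑ z, (P t * L) x z * u z)
      = (∑ w, (if (G.dist x w : ℝ) ≤ r then P t x w else 0)) / Vol - P t x x / μv x := by
    intro t
    calc ∑ z, (P t * L) x z * u z
        = ∑ z, ∑ w, P t x w * L w z * u z := by
          apply Finset.sum_congr rfl
          intro z _
          rw [Matrix.mul_apply, Finset.sum_mul]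
      _ = ∑ w, ∑ z, P t x w * L w z * u z := Finset.sum_comm
      _ = ∑ w, P t x w * vv w := by
          apply Finset.sum_congr rfl
          intro w _
          rw [← hLu w, Finset.mul_sum]
          exact Finset.sum_congr rfl fun z _ => by ring
      _ = ∑ w, ((if (G.dist x w : ℝ) ≤ r then P t x w else 0) / Vol
          - (if w = x then P t x w / μv x else 0)) := by
          apply Finset.sum_congr rfl
          intro w _
          simp only [hvvdef]
          split_ifs <;> ring
      _ = (∑ w, (if (G.dist x w : ℝ) ≤ r then P t x w else 0)) / Vol - P t x x / μv x := by
          rw [Finset.sum_sub_distrib, Finset.sum_div]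
          congr 1
          simp
  -- the derivative bound on [0, T]
  set δ : ℝ := q T x x - 1 / Vol with hδdef
  have hFd_le : ∀ t ∈ Set.Icc (0:ℝ) T, (∑ z, (P t * L) x z * u z) ≤ -δ := by
    intro t ht
    rw [hFd_eq t]
    have hmass : (∑ w, (if (G.dist x w : ℝ) ≤ r then P t x w else 0)) ≤ 1 := by
      calc (∑ w, (if (G.dist x w : ℝ) ≤ r then P t x w else 0)) ≤ ∑ w, P t x w := by
            apply Finset.sum_le_sum
            intro w _
            split
            · exact le_refl _
            · exact hPnn t ht.1 x w
        _ = 1 := hProw t x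
    have hqm : q T x x ≤ P t x x / μv x := by
      rw [← hqP t, hqψ t, hqψ T]
      exact hψanti (by linarith [ht.2] : t / 2 ≤ T / 2)
    have h1 : (∑ w, (if (G.dist x w : ℝ) ≤ r then P t x w else 0)) / Vol ≤ 1 / Vol := by
      gcongr
    rw [hδdef]
    linarith [h1, hqm]
  -- mean value argument
  set Φ : ℝ → ℝ := fun t => F t + δ * t with hΦdef
  have hΦderiv : ∀ t : ℝ, HasDerivAt Φ ((∑ z, (P t * L) x z * u z) + δ) t := by
    intro t
    simp only [hΦdef]
    have h2 : HasDerivAt (fun s : ℝ => δ * s) δ t := by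
      simpa using (hasDerivAt_id t).const_mul δ
    exact (hFderiv t).add h2
  have hΦanti : AntitoneOn Φ (Set.Icc 0 T) := by
    apply antitoneOn_of_deriv_nonpos (convex_Icc 0 T)
    · exact (Differentiable.continuous fun t => (hΦderiv t).differentiableAt).continuousOn
    · intro t _
      exact (hΦderiv t).differentiableAt.differentiableWithinAt
    · intro t htint
      rw [interior_Icc] at htint
      rw [(hΦderiv t).deriv]
      have h3 := hFd_le t ⟨htint.1.le, htint.2.le⟩
      linarith
  have hΦTle : Φ T ≤ Φ 0 :=
    hΦanti (Set.left_mem_Icc.2 hTpos.le) (Set.right_mem_Icc.2 hTpos.le) hTpos.le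
  have hF0 : F 0 = u x := by
    simp only [hFdef]
    have hP0 : P 0 = (1 : Matrix V V ℝ) := by
      show NormedSpace.exp ((0:ℝ) • L) = 1
      rw [zero_smul]
      exact NormedSpace.exp_zero
    rw [hP0]
    simp [Matrix.one_apply]
  -- minimum of u
  obtain ⟨z₀, _, hz₀⟩ := Finset.exists_min_image Finset.univ u ⟨x, Finset.mem_univ x⟩
  have hz₀' : ∀ z, u z₀ ≤ u z := fun z => hz₀ z (Finset.mem_univ z)
  have hFT : u z₀ ≤ F T := by
    simp only [hFdef]
    calc u z₀ = (∑ z, P T x z) * u z₀ := by rw [hProw T x, one_mul]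
      _ = ∑ z, P T x z * u z₀ := by rw [Finset.sum_mul]
      _ ≤ ∑ z, P T x z * u z := Finset.sum_le_sum fun z _ =>
          mul_le_mul_of_nonneg_left (hz₀' z) (hPnn T hTpos.le x z)
  set osc : ℝ := u x - u z₀ with hoscdef
  have hoscnn : 0 ≤ osc := by rw [hoscdef]; linarith [hz₀' x]
  have hδT : δ * T ≤ osc := by
    have h1 : Φ T = F T + δ * T := by simp only [hΦdef]
    have h2 : Φ 0 = F 0 := by simp only [hΦdef]; ring
    rw [hoscdef]
    have h3 := hΦTle
    rw [h1, h2, hF0] at h3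
    linarith [hFT]
  -- the minimum principle : the minimum is attained inside the ball
  have hstep : ∀ a c : V, G.Adj a c → ¬ ((G.dist x a : ℝ) ≤ r) → u a = u z₀ → u c = u z₀ := by
    intro a c hadj hB ha
    have hax : a ≠ x := by
      intro he
      apply hB
      rw [he]
      simp only [SimpleGraph.dist_self, Nat.cast_zero]
      exact hr.le
    have hva : vv a = 0 := by
      simp only [hvvdef]
      rw [if_neg hB, if_neg hax]
      norm_num
    have h0 : ∑ w, L a w * u w = 0 := by rw [hLu a, hva]
    have e1 : ∑ w, L a w * u w = (∑ w, μ a w * u w) / μv a - u a := by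
      calc ∑ w, L a w * u w
          = ∑ w, (μ a w / μv a * u w - (if a = w then u w else 0)) := by
            apply Finset.sum_congr rfl
            intro w _
            rw [hLsplit a w]
            split_ifs <;> ring
        _ = (∑ w, μ a w / μv a * u w) - ∑ w, (if a = w then u w else 0) :=
            Finset.sum_sub_distrib _ _
        _ = (∑ w, μ a w * u w) / μv a - u a := by
            rw [Finset.sum_div]
            congr 1
            · exact Finset.sum_congr rfl fun w _ => by ring
            · simp
    have h2 : ∑ w, μ a w * u w = μv a * u a := by
      rw [e1] at h0
      have h3 : (∑ w, μ a w * u w) / μv a = u a := by linarith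
      rw [div_eq_iff (hμvne a)] at h3
      linear_combination h3
    have h4 : ∑ w, μ a w * (u w - u z₀) = 0 := by
      calc ∑ w, μ a w * (u w - u z₀)
          = (∑ w, μ a w * u w) - (∑ w, μ a w) * u z₀ := by
            rw [Finset.sum_mul, ← Finset.sum_sub_distrib]
            exact Finset.sum_congr rfl fun w _ => by ring
        _ = μv a * u a - μv a * u z₀ := by rw [h2, ← hμv a]
        _ = 0 := by rw [ha]; ring
    have h5 := (Finset.sum_eq_zero_iff_of_nonneg
      (fun w _ => mul_nonneg (hnonneg a w) (sub_nonneg.2 (hz₀' w)))).1 h4 c (Finset.mem_univ c)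
    have hμac : 0 < μ a c := ((hG a c).1 hadj).2
    rcases mul_eq_zero.1 h5 with h | h
    · exact absurd h hμac.ne'
    · linarith [h]
  have hminball : ∃ b : V, (G.dist x b : ℝ) ≤ r ∧ u b = u z₀ := by
    have hprop : ∀ (a b : V) (p : G.Walk a b), (G.dist x b : ℝ) ≤ r → u a = u z₀ →
        ∃ bb : V, (G.dist x bb : ℝ) ≤ r ∧ u bb = u z₀ := by
      intro a b p
      induction p with
      | nil => exact fun hb ha => ⟨_, hb, ha⟩
      | @cons a' c' b' hadj q ih =>
        intro hb ha
        by_cases hB : (G.dist x a' : ℝ) ≤ r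
        · exact ⟨a', hB, ha⟩
        · exact ih hb (hstep a' c' hadj hB ha)
    obtain ⟨p⟩ := hconn.preconnected z₀ x
    exact hprop z₀ x p (by simp only [SimpleGraph.dist_self, Nat.cast_zero]; exact hr.le) rfl
  obtain ⟨zs, hzs_ball, hzsmin⟩ := hminball
  -- energy bound : D2 u ≤ 2 osc
  have hD2u : ∑ z, ∑ w, μ z w * (u z - u w) ^ 2 ≤ 2 * osc := by
    have h1 : ∑ z, (∑ w, (μv z * L z w) * u w) * u z = ∑ z, (μv z * vv z) * u z := by
      apply Finset.sum_congr rfl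
      intro z _
      rw [← hcmul u z, hu]
    have h2 : ∑ z, (μv z * vv z) * u z
        = (∑ z, (if (G.dist x z : ℝ) ≤ r then μv z * u z else 0)) / Vol - u x := by
      calc ∑ z, (μv z * vv z) * u z
          = ∑ z, ((if (G.dist x z : ℝ) ≤ r then μv z * u z else 0) / Vol
            - (if z = x then μv z * u z / μv x else 0)) := by
            apply Finset.sum_congr rfl
            intro z _
            simp only [hvvdef]
            split_ifs <;> ring
        _ = (∑ z, (if (G.dist x z : ℝ) ≤ r then μv z * u z else 0)) / Vol
            - ∑ z, (if z = x then μv z * u z / μv x else 0) := by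
            rw [Finset.sum_sub_distrib, Finset.sum_div]
        _ = (∑ z, (if (G.dist x z : ℝ) ≤ r then μv z * u z else 0)) / Vol - u x := by
            congr 1
            rw [Finset.sum_ite_eq']
            simp only [Finset.mem_univ, if_true]
            exact mul_div_cancel_left₀ _ (hμvne x)
    have h3 : u z₀ ≤ (∑ z, (if (G.dist x z : ℝ) ≤ r then μv z * u z else 0)) / Vol := by
      have h4 : Vol * u z₀ ≤ ∑ z, (if (G.dist x z : ℝ) ≤ r then μv z * u z else 0) := by
        rw [hVol, Finset.sum_mul]
        apply Finset.sum_le_sum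
        intro z _
        by_cases hc : (G.dist x z : ℝ) ≤ r
        · simp only [if_pos hc]
          exact mul_le_mul_of_nonneg_left (hz₀' z) (hpos z).le
        · simp [if_neg hc]
      calc u z₀ = Vol * u z₀ / Vol := by field_simp
        _ ≤ (∑ z, (if (G.dist x z : ℝ) ≤ r then μv z * u z else 0)) / Vol := by gcongr
    have h5 := hquad u
    rw [h1, h2] at h5
    rw [hoscdef]
    linarith [h3, h5]
  -- walk bound : osc² ≤ r * 2 * osc
  have hμ1 : ∀ z w, G.Adj z w → 1 ≤ μ z w := by
    intro z w h
    exact hone z w (((hG z w).1 h).2.ne')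
  obtain ⟨p, hpath, hplen⟩ := hconn.exists_path_of_dist x zs
  have hplen' : (p.length : ℝ) ≤ r := by rw [hplen]; exact hzs_ball
  have hosc2 : osc ^ 2 ≤ r * (2 * osc) := by
    have hw1 := walk_sq_bound μ hμ1 u p
    have hw2 := darts_sum_le μ hnonneg u p hpath
    have hslnn : 0 ≤ (p.darts.map fun d =>
        μ d.toProd.1 d.toProd.2 * (u d.toProd.1 - u d.toProd.2) ^ 2).sum := by
      apply List.sum_nonneg
      intro y hy
      obtain ⟨d, _, rfl⟩ := List.mem_map.1 hy
      exact mul_nonneg (hnonneg _ _) (sq_nonneg _)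
    calc osc ^ 2 = (u x - u zs) ^ 2 := by rw [hoscdef, hzsmin]
      _ ≤ (p.length : ℝ) * (p.darts.map fun d =>
            μ d.toProd.1 d.toProd.2 * (u d.toProd.1 - u d.toProd.2) ^ 2).sum := hw1
      _ ≤ r * (p.darts.map fun d =>
            μ d.toProd.1 d.toProd.2 * (u d.toProd.1 - u d.toProd.2) ^ 2).sum :=
          mul_le_mul_of_nonneg_right hplen' hslnn
      _ ≤ r * (∑ z, ∑ w, μ z w * (u z - u w) ^ 2) := mul_le_mul_of_nonneg_left hw2 hr.le
      _ ≤ r * (2 * osc) := mul_le_mul_of_nonneg_left hD2u hr.le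
  have hosc_le : osc ≤ 2 * r := by nlinarith [hoscnn, hr, hosc2]
  -- conclusion
  have hfinal : δ * T ≤ 2 * r := le_trans hδT hosc_le
  have hδle : δ ≤ 2 * r / T := (le_div_iff₀ hTpos).2 hfinal
  have h2rT : 2 * r / T = 1 / Vol := by
    rw [hTdef, div_eq_div_iff (by positivity : (0:ℝ) < 2 * r * Vol).ne' hVolne]
    ring
  have hq_eq : q T x x = δ + 1 / Vol := by rw [hδdef]; ring
  rw [hq_eq]
  linarith [hδle, h2rT.le, h2rT.ge, (by ring : (1:ℝ)/Vol + 1/Vol = 2/Vol)]
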